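/- Let q be an odd prime power, l odd, and X₁, X₂ subsets of 𝔽_{q^l}^*/𝔽_q^* with X₁ ∩ X₂ = ∅. Define 𝔻(X) = {x ∈ S_{𝔽_{q^l}} : π(x) ∈ X} ∪ {x ∈ N_{𝔽_{q^l}} : π(x) ∉ X}, where π: 𝔽_{q^l}^* → 𝔽_{q^l}^*/𝔽_q^* is the projection, and S, N are the nonzero squares and non-squares of 𝔽_{q^l}. If 𝔻(X₁) and 𝔻(X₂) are both Paley type group schemes in (𝔽_{q^l}, +), then 𝔻(X₁ ∪ X₂) is also a Paley type group scheme in (𝔽_{q^l}, +). -/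

import Mathlib

open Finset
open scoped Classical

/-- The formal sum `∑_{x ∈ s} x` in the integral group ring of `(F,+)`. -/
noncomputable def asum {F : Type*} [AddGroup F] [DecidableEq F] (s : Finset F) :
    AddMonoidAlgebra ℤ F :=
  ∑ x ∈ s, AddMonoidAlgebra.single x 1

/-- `D` is a Paley type group scheme in the finite additive group `F`:
`(1 + 2D^{(-1)})(1 + 2D) = |F| + (|F|-1)·F` in `ℤ[(F,+)]`. -/
def IsPaleyScheme {F : Type*} [AddGroup F] [Fintype F] [DecidableEq F]
    (D : Finset F) : Prop :=
  (1 + 2 • asum (D.image (fun x => -x))) * (1 + 2 • asum D) =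
    (Fintype.card F : ℤ) • 1 + ((Fintype.card F : ℤ) - 1) • asum (univ : Finset F)

/-- The subgroup `𝔽_q^*` of `𝔽_{q^l}^*`. -/
def baseSubgroup (K F : Type*) [Field K] [Field F] [Algebra K F] : Subgroup Fˣ :=
  (Units.map (algebraMap K F : K →+* F).toMonoidHom).range

/-- `𝔻(X) = {x ∈ S_{𝔽_{q^l}} : π(x) ∈ X} ∪ {x ∈ N_{𝔽_{q^l}} : π(x) ∉ X}`, for
`X ⊆ 𝔽_{q^l}^*/𝔽_q^*`, where `π` is the natural projection and `S`, `N` are the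
nonzero squares and non-squares of `𝔽_{q^l}`. -/
noncomputable def DX (K F : Type*) [Field K] [Field F] [Fintype K] [Fintype F]
    [Algebra K F] (X : Finset (Fˣ ⧸ baseSubgroup K F)) : Finset F :=
  ((univ : Finset Fˣ).filter (fun x : Fˣ =>
      (IsSquare (x : F) ↔ (QuotientGroup.mk x : Fˣ ⧸ baseSubgroup K F) ∈ X))).image
    (fun x : Fˣ => (x : F))

namespace Stmt18Proof

/-! ### Generic sum helpers -/

/-- Sum over a finite field equals value at `0` plus the sum over units. -/
lemma sum_split {R M : Type*} [Field R] [Fintype R] [AddCommMonoid M] (g : R → M) :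
    ∑ x : R, g x = g 0 + ∑ k : Rˣ, g (k : R) := by
  classical
  rw [← Finset.add_sum_erase _ g (Finset.mem_univ (0 : R))]
  congr 1
  refine (Finset.sum_bij' (fun (a : R) (ha : a ∈ (univ : Finset R).erase 0) =>
      Units.mk0 a (Finset.mem_erase.mp ha).1)
      (fun (k : Rˣ) (_ : k ∈ (univ : Finset Rˣ)) => (k : R)) ?_ ?_ ?_ ?_ ?_)
  · intro a ha; exact Finset.mem_univ _
  · intro k _; exact Finset.mem_erase.mpr ⟨Units.ne_zero k, Finset.mem_univ _⟩
  · intro a ha; rfl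
  · intro k _; exact Units.ext rfl
  · intro a ha; rfl

lemma sum_units {R M : Type*} [Field R] [Fintype R] [AddCommMonoid M] (g : R → M)
    (h0 : g 0 = 0) : ∑ x : R, g x = ∑ k : Rˣ, g (k : R) := by
  rw [sum_split g, h0, zero_add]

variable {K F E : Type*} [Field K] [Fintype K] [Field F] [Fintype F] [Algebra K F]
  [Field E] [CharZero E]

/-! ### Main auxiliary definitions -/

/-- Quadratic character of `K` with values in `E`. -/
noncomputable def chiK (K E : Type*) [Field K] [Fintype K] [Field E] : MulChar K E :=
  (quadraticChar K).ringHomComp (Int.castRingHom E)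

/-- Quadratic character of `F` with values in `E`. -/
noncomputable def chiF (F E : Type*) [Field F] [Fintype F] [Field E] : MulChar F E :=
  (quadraticChar F).ringHomComp (Int.castRingHom E)

/-- The additive character of `F` obtained from an additive character of `K` and a
`K`-linear functional. -/
noncomputable def psi0 (ψK : AddChar K E) (lam : F →ₗ[K] K) : AddChar F E :=
  ψK.compAddMonoidHom lam.toAddMonoidHom

@[simp] lemma psi0_apply (ψK : AddChar K E) (lam : F →ₗ[K] K) (x : F) :
    psi0 ψK lam x = ψK (lam x) := rfl

/-- The base Gauss sum over `K`. -/
noncomputable def gam (K : Type*) {E : Type*} [Field K] [Fintype K] [Field E]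
    (ψK : AddChar K E) : E :=
  gaussSum (chiK K E) ψK

/-- The integer entries `e_c(b)` of the Singer weighing structure. -/
noncomputable def ec (lam : F →ₗ[K] K) (b : F) (c : Fˣ ⧸ baseSubgroup K F) : ℤ :=
  quadraticChar F ((Quotient.out c : Fˣ) : F) *
    quadraticChar K (lam (b * ((Quotient.out c : Fˣ) : F)))

lemma ec_zero (lam : F →ₗ[K] K) (c : Fˣ ⧸ baseSubgroup K F) : ec lam 0 c = 0 := by
  simp [ec]

lemma ec_neg (lam : F →ₗ[K] K) (b : F) (c : Fˣ ⧸ baseSubgroup K F) :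
    ec lam (-b) c = quadraticChar K (-1) * ec lam b c := by
  unfold ec
  rw [show -b * ((Quotient.out c : Fˣ) : F) = -(b * ((Quotient.out c : Fˣ) : F)) by ring,
    map_neg, show -(lam (b * ((Quotient.out c : Fˣ) : F))) =
      (-1) * lam (b * ((Quotient.out c : Fˣ) : F)) by ring, map_mul]
  ring

/-! ### Coset decomposition -/

lemma coset_sum {M : Type*} [AddCommMonoid M] (f : Fˣ → M) (c : Fˣ ⧸ baseSubgroup K F) :
    ∑ x ∈ univ.filter (fun x : Fˣ => (QuotientGroup.mk x : Fˣ ⧸ baseSubgroup K F) = c), f x =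
      ∑ k : Kˣ, f (Quotient.out c * Units.map (algebraMap K F : K →+* F).toMonoidHom k) := by
  refine (Finset.sum_bij (fun (k : Kˣ) (_ : k ∈ (univ : Finset Kˣ)) =>
      Quotient.out c * Units.map (algebraMap K F : K →+* F).toMonoidHom k) ?_ ?_ ?_ ?_).symm
  · intro k _
    simp only [Finset.mem_filter, Finset.mem_univ, true_and]
    have hmem : Units.map (algebraMap K F : K →+* F).toMonoidHom k ∈ baseSubgroup K F := ⟨k, rfl⟩
    calc (QuotientGroup.mk (Quotient.out c *
            Units.map (algebraMap K F : K →+* F).toMonoidHom k) : Fˣ ⧸ baseSubgroup K F)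
        = QuotientGroup.mk (Quotient.out c) := QuotientGroup.mk_mul_of_mem _ hmem
      _ = c := QuotientGroup.out_eq' c
  · intro k₁ _ k₂ _ h
    exact Units.map_injective (algebraMap K F).injective (mul_left_cancel h)
  · intro x hx
    simp only [Finset.mem_filter, Finset.mem_univ, true_and] at hx
    have h1 : (QuotientGroup.mk (Quotient.out c) : Fˣ ⧸ baseSubgroup K F)
        = QuotientGroup.mk x := by rw [QuotientGroup.out_eq' c, hx]
    obtain ⟨k, hk⟩ := QuotientGroup.eq.mp h1
    refine ⟨k, Finset.mem_univ _, ?_⟩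
    show Quotient.out c * Units.map (algebraMap K F : K →+* F).toMonoidHom k = x
    rw [hk, mul_inv_cancel_left]
  · intro k _; rfl

/-! ### Per-coset Gauss sum evaluation -/

lemma coset_eval
    (hres : ∀ k : Kˣ, quadraticChar F (algebraMap K F (k : K)) = quadraticChar K (k : K))
    (hK2 : ringChar K ≠ 2) (ψK : AddChar K E) (lam : F →ₗ[K] K) (b : F)
    (c : Fˣ ⧸ baseSubgroup K F) :
    ∑ k : Kˣ, ((quadraticChar F
        ((Quotient.out c * Units.map (algebraMap K F : K →+* F).toMonoidHom k : Fˣ) : F) : ℤ) : E)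
        * psi0 ψK lam
          (b * ((Quotient.out c * Units.map (algebraMap K F : K →+* F).toMonoidHom k : Fˣ) : F))
      = ((ec lam b c : ℤ) : E) * gam K ψK := by
  have hchiKne : chiK K E ≠ 1 := by
    refine fun h => quadraticChar_ne_one hK2 ?_
    exact (MulChar.ringHomComp_eq_one_iff (f := Int.castRingHom E)
      (fun a b hab => by simpa using hab)).mp h
  set u : F := ((Quotient.out c : Fˣ) : F) with hu
  set a : K := lam (b * u) with ha
  have hcoe : ∀ k : Kˣ,
      ((Quotient.out c * Units.map (algebraMap K F : K →+* F).toMonoidHom k : Fˣ) : F)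
        = u * algebraMap K F (k : K) := by
    intro k; simp [hu]
  have step : ∀ k : Kˣ,
      ((quadraticChar F
        ((Quotient.out c * Units.map (algebraMap K F : K →+* F).toMonoidHom k : Fˣ) : F) : ℤ) : E)
        * psi0 ψK lam
          (b * ((Quotient.out c * Units.map (algebraMap K F : K →+* F).toMonoidHom k : Fˣ) : F))
      = ((quadraticChar F u : ℤ) : E) *
          (((quadraticChar K (k : K) : ℤ) : E) * ψK (a * (k : K))) := by
    intro k
    rw [hcoe k]
    have h1 : quadraticChar F (u * algebraMap K F (k : K))
        = quadraticChar F u * quadraticChar K (k : K) := by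
      rw [map_mul, hres k]
    have h2 : lam (b * (u * algebraMap K F (k : K))) = a * (k : K) := by
      have : b * (u * algebraMap K F (k : K)) = (k : K) • (b * u) := by
        rw [Algebra.smul_def]; ring
      rw [this, map_smul, smul_eq_mul, ha, mul_comm]
    rw [psi0_apply, h2, h1]
    push_cast
    ring
  rw [Finset.sum_congr rfl (fun k _ => step k), ← Finset.mul_sum]
  have hsum : ∑ k : Kˣ, ((quadraticChar K (k : K) : ℤ) : E) * ψK (a * (k : K))
      = gaussSum (chiK K E) (AddChar.mulShift ψK a) := by
    rw [gaussSum]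
    rw [sum_units (fun x : K => chiK K E x * AddChar.mulShift ψK a x) (by simp [chiK])]
    refine Finset.sum_congr rfl fun k _ => ?_
    simp [chiK, MulChar.ringHomComp_apply]
  rw [hsum]
  by_cases haz : a = 0
  · rw [haz, AddChar.mulShift_zero]
    have : gaussSum (chiK K E) (1 : AddChar K E) = 0 := by
      rw [gaussSum]
      simp only [AddChar.one_apply, mul_one]
      exact MulChar.sum_eq_zero_of_ne_one hchiKne
    rw [this]
    have : ec lam b c = 0 := by
      rw [ec, ← hu, ← ha, haz, quadraticChar_zero, mul_zero]
    rw [this]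
    push_cast
    ring
  · have hg := gaussSum_mulShift (chiK K E) ψK (Units.mk0 a haz)
    have hsq : chiK K E a * chiK K E a = 1 := by
      have h1 : (quadraticChar K a) ^ 2 = 1 := quadraticChar_sq_one haz
      have : ((quadraticChar K a : ℤ) : E) * ((quadraticChar K a : ℤ) : E) = 1 := by
        rw [← Int.cast_mul, ← pow_two, h1]; norm_num
      simpa [chiK, MulChar.ringHomComp_apply] using this
    have hval : (Units.mk0 a haz : K) = a := rfl
    rw [hval] at hg
    have hGS : gaussSum (chiK K E) (AddChar.mulShift ψK a) = chiK K E a * gam K ψK := by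
      rw [gam, ← hg, ← mul_assoc, hsq, one_mul]
    rw [hGS, ec, ← hu, ← ha]
    have : chiK K E a = ((quadraticChar K a : ℤ) : E) := by
      simp [chiK, MulChar.ringHomComp_apply]
    rw [this]
    push_cast
    ring

/-! ### The master transform -/

lemma master
    (hres : ∀ k : Kˣ, quadraticChar F (algebraMap K F (k : K)) = quadraticChar K (k : K))
    (hK2 : ringChar K ≠ 2) (ψK : AddChar K E) (lam : F →ₗ[K] K)
    (w : (Fˣ ⧸ baseSubgroup K F) → ℤ) (b : F) :
    ∑ x : Fˣ, ((w (QuotientGroup.mk x) * quadraticChar F (x : F) : ℤ) : E)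
        * psi0 ψK lam (b * (x : F))
      = ((∑ c, w c * ec lam b c : ℤ) : E) * gam K ψK := by
  classical
  rw [← Finset.sum_fiberwise (univ : Finset Fˣ)
    (fun x : Fˣ => (QuotientGroup.mk x : Fˣ ⧸ baseSubgroup K F))
    (fun x : Fˣ => ((w (QuotientGroup.mk x) * quadraticChar F (x : F) : ℤ) : E)
        * psi0 ψK lam (b * (x : F)))]
  have hc : ∀ c : Fˣ ⧸ baseSubgroup K F,
      ∑ x ∈ univ.filter (fun x : Fˣ => (QuotientGroup.mk x : Fˣ ⧸ baseSubgroup K F) = c),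
        ((w (QuotientGroup.mk x) * quadraticChar F (x : F) : ℤ) : E) * psi0 ψK lam (b * (x : F))
      = ((w c * ec lam b c : ℤ) : E) * gam K ψK := by
    intro c
    have h1 : ∑ x ∈ univ.filter (fun x : Fˣ => (QuotientGroup.mk x : Fˣ ⧸ baseSubgroup K F) = c),
        ((w (QuotientGroup.mk x) * quadraticChar F (x : F) : ℤ) : E) * psi0 ψK lam (b * (x : F))
      = ((w c : ℤ) : E) *
        ∑ x ∈ univ.filter (fun x : Fˣ => (QuotientGroup.mk x : Fˣ ⧸ baseSubgroup K F) = c),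
          ((quadraticChar F (x : F) : ℤ) : E) * psi0 ψK lam (b * (x : F)) := by
      rw [Finset.mul_sum]
      refine Finset.sum_congr rfl fun x hx => ?_
      obtain ⟨-, hx⟩ := Finset.mem_filter.mp hx
      rw [hx]
      push_cast
      ring
    rw [h1, coset_sum (fun x : Fˣ =>
        ((quadraticChar F (x : F) : ℤ) : E) * psi0 ψK lam (b * (x : F))) c,
      coset_eval hres hK2 ψK lam b c]
    push_cast
    ring
  rw [Finset.sum_congr rfl (fun c _ => hc c), ← Finset.sum_mul]
  congr 1
  push_cast
  rfl

/-! ### The lift homomorphism -/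

/-- Evaluation of the group ring at the character `x ↦ ψ (b x)`. -/
noncomputable def Phi (ψ : AddChar F E) (b : F) : AddMonoidAlgebra ℤ F →ₐ[ℤ] E :=
  AddMonoidAlgebra.lift ℤ E F (AddChar.toMonoidHom (AddChar.mulShift ψ b))

lemma Phi_single (ψ : AddChar F E) (b x : F) (n : ℤ) :
    Phi ψ b (AddMonoidAlgebra.single x n) = (n : E) * ψ (b * x) := by
  simp [Phi, AddMonoidAlgebra.lift_single, zsmul_eq_mul]

lemma Phi_asum (ψ : AddChar F E) (b : F) (s : Finset F) :
    Phi ψ b (asum s) = ∑ x ∈ s, ψ (b * x) := by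
  rw [asum, map_sum]
  refine Finset.sum_congr rfl fun x _ => ?_
  rw [Phi_single]
  norm_num

lemma Phi_apply (ψ : AddChar F E) (b : F) (u : AddMonoidAlgebra ℤ F) :
    Phi ψ b u = ∑ x : F, (u.coeff x : E) * ψ (b * x) := by
  classical
  rw [Phi, AddMonoidAlgebra.lift_apply, Finsupp.sum_fintype]
  · refine Finset.sum_congr rfl fun x _ => ?_
    simp [zsmul_eq_mul]
  · intro a
    exact zero_smul ℤ _

lemma ortho (ψ : AddChar F E) (hψ : ψ.IsPrimitive) (z : F) :
    ∑ b : F, ψ (z * b) = if z = 0 then (Fintype.card F : E) else 0 := by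
  classical
  have h := AddChar.sum_mulShift (ψ := ψ) z hψ
  have h2 : ∑ b : F, ψ (z * b) = ∑ b : F, ψ (b * z) :=
    Finset.sum_congr rfl fun b _ => by rw [mul_comm]
  rw [h2, h]
  split_ifs <;> simp

lemma phi_inj (ψ : AddChar F E) (hψ : ψ.IsPrimitive) {u v : AddMonoidAlgebra ℤ F}
    (h : ∀ b : F, Phi ψ b u = Phi ψ b v) : u = v := by
  classical
  have hcard : (Fintype.card F : E) ≠ 0 := by
    exact_mod_cast Nat.cast_ne_zero.mpr Fintype.card_ne_zero
  have key : ∀ y : F, ((u - v).coeff y : E) = 0 := by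
    intro y
    have h0 : ∀ b : F, Phi ψ b (u - v) = 0 := by
      intro b; rw [map_sub, h b, sub_self]
    have hsum : ∑ b : F, Phi ψ b (u - v) * ψ (b * (-y)) = 0 := by
      rw [Finset.sum_congr rfl (fun b _ => by rw [h0 b, zero_mul]), Finset.sum_const, smul_zero]
    have step1 : ∀ b : F, Phi ψ b (u - v) * ψ (b * (-y))
        = ∑ x : F, ((u - v).coeff x : E) * ψ ((x - y) * b) := by
      intro b
      rw [Phi_apply, Finset.sum_mul]
      refine Finset.sum_congr rfl fun x _ => ?_
      rw [mul_assoc, ← AddChar.map_add_eq_mul]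
      congr 1
      ring
    have hexp : ∑ b : F, Phi ψ b (u - v) * ψ (b * (-y))
        = ∑ x : F, ((u - v).coeff x : E) * ∑ b : F, ψ ((x - y) * b) := by
      rw [Finset.sum_congr rfl (fun b _ => step1 b), Finset.sum_comm]
      exact Finset.sum_congr rfl fun x _ => (Finset.mul_sum _ _ _).symm
    have hfin : ∑ x : F, ((u - v).coeff x : E) * ∑ b : F, ψ ((x - y) * b)
        = ((u - v).coeff y : E) * (Fintype.card F : E) := by
      have : ∀ x : F, ((u - v).coeff x : E) * ∑ b : F, ψ ((x - y) * b)
          = if x = y then ((u - v).coeff x : E) * (Fintype.card F : E) else 0 := by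
        intro x
        rw [ortho ψ hψ (x - y)]
        by_cases hxy : x = y
        · simp [hxy, sub_self]
        · rw [if_neg (sub_ne_zero.mpr hxy), if_neg hxy, mul_zero]
      rw [Finset.sum_congr rfl (fun x _ => this x), Finset.sum_ite_eq' univ y
        (fun x => ((u - v).coeff x : E) * (Fintype.card F : E))]
      simp
    rw [hexp, hfin] at hsum
    exact (mul_eq_zero.mp hsum).resolve_right hcard
  have hz : ∀ y : F, (u - v).coeff y = 0 := fun y => by exact_mod_cast key y
  have : u - v = 0 := AddMonoidAlgebra.ext (Finsupp.ext fun y => by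
    rw [AddMonoidAlgebra.coeff_zero, Finsupp.zero_apply]; exact hz y)
  exact sub_eq_zero.mp this

/-! ### The value of the Paley factors -/

lemma value
    (hres : ∀ k : Kˣ, quadraticChar F (algebraMap K F (k : K)) = quadraticChar K (k : K))
    (hK2 : ringChar K ≠ 2) (ψK : AddChar K E) (lam : F →ₗ[K] K)
    (X : Finset (Fˣ ⧸ baseSubgroup K F)) (b : F) :
    (1 : E) + 2 * ∑ d ∈ DX K F X, psi0 ψK lam (b * d)
      = (∑ x : F, psi0 ψK lam (b * x))
        + ((∑ c, (if c ∈ X then 1 else -1) * ec lam b c : ℤ) : E) * gam K ψK := by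
  classical
  have himg : ∑ d ∈ DX K F X, psi0 ψK lam (b * d)
      = ∑ x ∈ univ.filter (fun x : Fˣ =>
          (IsSquare (x : F) ↔ (QuotientGroup.mk x : Fˣ ⧸ baseSubgroup K F) ∈ X)),
          psi0 ψK lam (b * (x : F)) := by
    rw [DX, Finset.sum_image]
    intro x _ y _ hxy
    exact Units.ext hxy
  have key : ∀ x : Fˣ,
      (if (IsSquare (x : F) ↔ (QuotientGroup.mk x : Fˣ ⧸ baseSubgroup K F) ∈ X)
        then (2 : E) else 0)
      = ((1 + (if (QuotientGroup.mk x : Fˣ ⧸ baseSubgroup K F) ∈ X then 1 else -1)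
          * quadraticChar F (x : F) : ℤ) : E) := by
    intro x
    have hx0 : ((x : Fˣ) : F) ≠ 0 := Units.ne_zero x
    by_cases hs : IsSquare (x : F) <;>
      by_cases hm : (QuotientGroup.mk x : Fˣ ⧸ baseSubgroup K F) ∈ X
    · rw [if_pos (iff_of_true hs hm), if_pos hm,
        (quadraticChar_one_iff_isSquare hx0).mpr hs]; norm_num
    · rw [if_neg (fun hIff => hm (hIff.mp hs)), if_neg hm,
        (quadraticChar_one_iff_isSquare hx0).mpr hs]; norm_num
    · rw [if_neg (fun hIff => hs (hIff.mpr hm)), if_pos hm,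
        quadraticChar_neg_one_iff_not_isSquare.mpr hs]; norm_num
    · rw [if_pos (iff_of_false hs hm), if_neg hm,
        quadraticChar_neg_one_iff_not_isSquare.mpr hs]; norm_num
  have hsplit : ∑ x : F, psi0 ψK lam (b * x)
      = 1 + ∑ x : Fˣ, psi0 ψK lam (b * (x : F)) := by
    rw [sum_split (fun x : F => psi0 ψK lam (b * x))]
    congr 1
    rw [mul_zero]
    exact AddChar.map_zero_eq_one _
  rw [himg]
  have h2 : (2 : E) * ∑ x ∈ univ.filter (fun x : Fˣ =>
        (IsSquare (x : F) ↔ (QuotientGroup.mk x : Fˣ ⧸ baseSubgroup K F) ∈ X)),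
        psi0 ψK lam (b * (x : F))
      = ∑ x : Fˣ, ((1 + (if (QuotientGroup.mk x : Fˣ ⧸ baseSubgroup K F) ∈ X then 1 else -1)
          * quadraticChar F (x : F) : ℤ) : E) * psi0 ψK lam (b * (x : F)) := by
    rw [Finset.mul_sum, ← Finset.sum_filter_add_sum_filter_not
      (univ : Finset Fˣ)
      (fun x : Fˣ => (IsSquare (x : F) ↔ (QuotientGroup.mk x : Fˣ ⧸ baseSubgroup K F) ∈ X))
      (fun x : Fˣ => ((1 + (if (QuotientGroup.mk x : Fˣ ⧸ baseSubgroup K F) ∈ X then 1 else -1)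
          * quadraticChar F (x : F) : ℤ) : E) * psi0 ψK lam (b * (x : F)))]
    have hA : ∀ x ∈ univ.filter (fun x : Fˣ =>
        (IsSquare (x : F) ↔ (QuotientGroup.mk x : Fˣ ⧸ baseSubgroup K F) ∈ X)),
        ((1 + (if (QuotientGroup.mk x : Fˣ ⧸ baseSubgroup K F) ∈ X then 1 else -1)
          * quadraticChar F (x : F) : ℤ) : E) * psi0 ψK lam (b * (x : F))
        = 2 * psi0 ψK lam (b * (x : F)) := by
      intro x hx
      have hcond := (Finset.mem_filter.mp hx).2
      rw [← key x, if_pos hcond]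
    have hB : ∀ x ∈ univ.filter (fun x : Fˣ =>
        ¬(IsSquare (x : F) ↔ (QuotientGroup.mk x : Fˣ ⧸ baseSubgroup K F) ∈ X)),
        ((1 + (if (QuotientGroup.mk x : Fˣ ⧸ baseSubgroup K F) ∈ X then 1 else -1)
          * quadraticChar F (x : F) : ℤ) : E) * psi0 ψK lam (b * (x : F)) = 0 := by
      intro x hx
      have hcond := (Finset.mem_filter.mp hx).2
      rw [← key x, if_neg hcond, zero_mul]
    rw [Finset.sum_congr rfl hA, Finset.sum_congr rfl hB, Finset.sum_const, smul_zero, add_zero]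
  rw [h2]
  have h3 : ∀ x : Fˣ,
      ((1 + (if (QuotientGroup.mk x : Fˣ ⧸ baseSubgroup K F) ∈ X then 1 else -1)
          * quadraticChar F (x : F) : ℤ) : E) * psi0 ψK lam (b * (x : F))
      = psi0 ψK lam (b * (x : F)) +
        (((if (QuotientGroup.mk x : Fˣ ⧸ baseSubgroup K F) ∈ X then 1 else -1)
          * quadraticChar F (x : F) : ℤ) : E) * psi0 ψK lam (b * (x : F)) := by
    intro x
    push_cast
    ring
  rw [Finset.sum_congr rfl (fun x _ => h3 x), Finset.sum_add_distrib,
    master hres hK2 ψK lam (fun c => if c ∈ X then 1 else -1) b, hsplit]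
  ring


/-! ### Small character lemmas -/

lemma chiK_ne_one (hK2 : ringChar K ≠ 2) : chiK K E ≠ 1 := fun h =>
  quadraticChar_ne_one hK2
    ((MulChar.ringHomComp_eq_one_iff (f := Int.castRingHom E)
      (fun a b hab => by simpa using hab)).mp h)

lemma chiF_ne_one (hF2 : ringChar F ≠ 2) : chiF F E ≠ 1 := fun h =>
  quadraticChar_ne_one hF2
    ((MulChar.ringHomComp_eq_one_iff (f := Int.castRingHom E)
      (fun a b hab => by simpa using hab)).mp h)

lemma chiK_apply (a : K) : chiK K E a = ((quadraticChar K a : ℤ) : E) := by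
  simp [chiK, MulChar.ringHomComp_apply]

lemma chiF_apply (a : F) : chiF F E a = ((quadraticChar F a : ℤ) : E) := by
  simp [chiF, MulChar.ringHomComp_apply]

/-! ### Indicator sum helpers -/

lemma sum_ite_mem_univ {α : Type*} [Fintype α] [DecidableEq α] (X : Finset α) (f : α → ℤ) :
    ∑ c, (if c ∈ X then f c else 0) = ∑ c ∈ X, f c := by
  rw [← Finset.sum_filter]
  congr 1
  ext c
  simp

lemma ind_sum {α : Type*} [Fintype α] [DecidableEq α] (X : Finset α) (f : α → ℤ) :
    ∑ c, (if c ∈ X then (1 : ℤ) else 0) * f c = ∑ c ∈ X, f c := by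
  rw [← sum_ite_mem_univ X f]
  exact Finset.sum_congr rfl fun c _ => by by_cases hc : c ∈ X <;> simp [hc]

lemma eps_sum {α : Type*} [Fintype α] [DecidableEq α] (X : Finset α) (f : α → ℤ) :
    ∑ c, (if c ∈ X then (1 : ℤ) else -1) * f c = 2 * (∑ c ∈ X, f c) - ∑ c, f c := by
  rw [← sum_ite_mem_univ X f, Finset.mul_sum, ← Finset.sum_sub_distrib]
  exact Finset.sum_congr rfl fun c _ => by by_cases hc : c ∈ X <;> simp [hc] <;> ring

lemma eps_union {α : Type*} [Fintype α] [DecidableEq α] (X₁ X₂ : Finset α)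
    (hd : X₁ ∩ X₂ = ∅) (f : α → ℤ) :
    ∑ c, (if c ∈ X₁ ∪ X₂ then (1 : ℤ) else -1) * f c
      = 2 * (∑ c ∈ X₁, f c) + 2 * (∑ c ∈ X₂, f c) - ∑ c, f c := by
  rw [← sum_ite_mem_univ X₁ f, ← sum_ite_mem_univ X₂ f, Finset.mul_sum, Finset.mul_sum,
    ← Finset.sum_add_distrib, ← Finset.sum_sub_distrib]
  refine Finset.sum_congr rfl fun c _ => ?_
  by_cases h1 : c ∈ X₁ <;> by_cases h2 : c ∈ X₂
  · exact absurd (Finset.mem_inter.mpr ⟨h1, h2⟩) (by simp [hd])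
  · simp [h1, h2]; ring
  · simp [h1, h2]; ring
  · simp [h1, h2]

/-! ### Parseval identity -/

lemma parseval (ψ : AddChar F E) (hψ : ψ.IsPrimitive) (a₁ a₂ : Fˣ → E) :
    ∑ b : F, (∑ x : Fˣ, a₁ x * ψ (b * (x : F))) * (∑ y : Fˣ, a₂ y * ψ (-b * (y : F)))
      = (Fintype.card F : E) * ∑ x : Fˣ, a₁ x * a₂ x := by
  classical
  have step1 : ∀ b : F, (∑ x : Fˣ, a₁ x * ψ (b * (x : F))) * (∑ y : Fˣ, a₂ y * ψ (-b * (y : F)))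
      = ∑ x : Fˣ, ∑ y : Fˣ, a₁ x * a₂ y * ψ (((x : F) - (y : F)) * b) := by
    intro b
    rw [Finset.sum_mul_sum]
    refine Finset.sum_congr rfl fun x _ => Finset.sum_congr rfl fun y _ => ?_
    rw [mul_mul_mul_comm, ← AddChar.map_add_eq_mul]
    congr 1
    ring
  rw [Finset.sum_congr rfl (fun b _ => step1 b), Finset.sum_comm]
  have step2 : ∀ x : Fˣ, ∑ b : F, ∑ y : Fˣ, a₁ x * a₂ y * ψ (((x : F) - (y : F)) * b)
      = (Fintype.card F : E) * (a₁ x * a₂ x) := by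
    intro x
    rw [Finset.sum_comm]
    have hy : ∀ y : Fˣ, ∑ b : F, a₁ x * a₂ y * ψ (((x : F) - (y : F)) * b)
        = if x = y then a₁ x * a₂ y * (Fintype.card F : E) else 0 := by
      intro y
      rw [← Finset.mul_sum, ortho ψ hψ ((x : F) - (y : F))]
      by_cases hxy : x = y
      · rw [if_pos hxy, if_pos (by rw [hxy, sub_self])]
      · rw [if_neg (fun h => hxy (Units.ext (sub_eq_zero.mp h))), if_neg hxy, mul_zero]
    rw [Finset.sum_congr rfl (fun y _ => hy y),
      Finset.sum_ite_eq (univ : Finset Fˣ) x (fun y => a₁ x * a₂ y * (Fintype.card F : E)),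
      if_pos (Finset.mem_univ x)]
    ring
  rw [Finset.sum_congr rfl (fun x _ => step2 x), ← Finset.mul_sum]

/-! ### Restriction of the quadratic character to the base field -/

lemma quadChar_res {q l : ℕ} (hq : Fintype.card K = q) (hqodd : Odd q)
    (hF : Fintype.card F = q ^ l) (hl : Odd l) (k : Kˣ) :
    quadraticChar F (algebraMap K F (k : K)) = quadraticChar K (k : K) := by
  obtain ⟨r, hr⟩ := hqodd
  have hqmod : q % 2 = 1 := Nat.odd_iff.mp ⟨r, hr⟩
  have hK2 : ringChar K ≠ 2 := by
    intro h
    have h2 := FiniteField.even_card_of_char_two (F := K) h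
    rw [hq] at h2
    omega
  have hqlodd : (q ^ l) % 2 = 1 := Nat.odd_iff.mp (Odd.pow ⟨r, hr⟩)
  have hF2 : ringChar F ≠ 2 := by
    intro h
    have h2 := FiniteField.even_card_of_char_two (F := F) h
    rw [hF] at h2
    omega
  set t := ∑ i ∈ Finset.range l, q ^ i with ht
  have htodd : t % 2 = 1 := by
    have h1 : ∀ i ∈ Finset.range l, q ^ i % 2 = 1 :=
      fun i _ => Nat.odd_iff.mp (Odd.pow ⟨r, hr⟩)
    calc t % 2 = (∑ i ∈ Finset.range l, q ^ i % 2) % 2 := Finset.sum_nat_mod _ _ _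
      _ = (∑ _i ∈ Finset.range l, 1) % 2 := by rw [Finset.sum_congr rfl h1]
      _ = l % 2 := by simp
      _ = 1 := Nat.odd_iff.mp hl
  have hql : q ^ l = 2 * (r * t) + 1 := by
    have ht' : (t : ℤ) = ∑ i ∈ Finset.range l, (q : ℤ) ^ i := by
      rw [ht]; push_cast; ring
    have hg := geom_sum_mul (q : ℤ) l
    rw [← ht'] at hg
    have hq' : (q : ℤ) = 2 * (r : ℤ) + 1 := by exact_mod_cast hr
    have hz : (q : ℤ) ^ l = 2 * ((r : ℤ) * (t : ℤ)) + 1 := by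
      linear_combination (t : ℤ) * hq' - hg
    exact_mod_cast hz
  have hcardF2 : Fintype.card F / 2 = r * t := by rw [hF, hql]; omega
  have hcardK2 : Fintype.card K / 2 = r := by rw [hq, hr]; omega
  have hk0 : (k : K) ≠ 0 := k.ne_zero
  have hιk0 : algebraMap K F (k : K) ≠ 0 := by
    intro h
    exact hk0 ((algebraMap K F).injective (by rw [h, map_zero]))
  have key : IsSquare (algebraMap K F (k : K)) ↔ IsSquare (k : K) := by
    rw [FiniteField.isSquare_iff hF2 hιk0, FiniteField.isSquare_iff hK2 hk0, hcardF2, hcardK2]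
    rcases FiniteField.pow_dichotomy hK2 hk0 with h | h
    · rw [hcardK2] at h
      have hval : (algebraMap K F (k : K)) ^ (r * t) = 1 := by
        rw [pow_mul, ← map_pow, h, map_one, one_pow]
      rw [hval, h]
      simp
    · rw [hcardK2] at h
      have hval : (algebraMap K F (k : K)) ^ (r * t) = -1 := by
        rw [pow_mul, ← map_pow, h, map_neg, map_one, Odd.neg_one_pow (Nat.odd_iff.mpr htodd)]
      have hne : (-1 : F) ≠ 1 := Ring.neg_one_ne_one_of_char_ne_two hF2
      have hneK : (-1 : K) ≠ 1 := Ring.neg_one_ne_one_of_char_ne_two hK2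
      rw [hval, h]
      simp [hne, hneK]
  by_cases hs : IsSquare (k : K)
  · rw [(quadraticChar_one_iff_isSquare hιk0).mpr (key.mpr hs),
      (quadraticChar_one_iff_isSquare hk0).mpr hs]
  · rw [quadraticChar_neg_one_iff_not_isSquare.mpr (fun h => hs (key.mp h)),
      quadraticChar_neg_one_iff_not_isSquare.mpr hs]

end Stmt18Proof


set_option maxHeartbeats 1000000 in
/-- if `X₁ ∩ X₂ = ∅` and `𝔻(X₁)`, `𝔻(X₂)` are Paley type group
schemes in `(𝔽_{q^l},+)`, so is `𝔻(X₁ ∪ X₂)`. -/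
theorem stmt18 {K F : Type*} [Field K] [Field F] [Fintype K] [Fintype F]
    [Algebra K F] (q l : ℕ) (hq : Fintype.card K = q) (hqodd : Odd q)
    (hF : Fintype.card F = q ^ l) (hl : Odd l)
    (X₁ X₂ : Finset (Fˣ ⧸ baseSubgroup K F)) (hdisj : X₁ ∩ X₂ = ∅)
    (h1 : IsPaleyScheme (DX K F X₁)) (h2 : IsPaleyScheme (DX K F X₂)) :
    IsPaleyScheme (DX K F (X₁ ∪ X₂)) := by
  classical
  have hq0 : q ≠ 0 := by rintro rfl; simpa using hqodd
  have hqmod : q % 2 = 1 := Nat.odd_iff.mp hqodd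
  have hK2 : ringChar K ≠ 2 := by
    intro h
    have h2' := FiniteField.even_card_of_char_two (F := K) h
    rw [hq] at h2'
    omega
  have hqlmod : q ^ l % 2 = 1 := Nat.odd_iff.mp hqodd.pow
  have hF2 : ringChar F ≠ 2 := by
    intro h
    have h2' := FiniteField.even_card_of_char_two (F := F) h
    rw [hF] at h2'
    omega
  have hres : ∀ k : Kˣ, quadraticChar F (algebraMap K F (k : K)) = quadraticChar K (k : K) :=
    fun k => Stmt18Proof.quadChar_res hq hqodd hF hl k
  -- a primitive additive character on K with char-zero values
  have hcharQ : ringChar ℚ ≠ ringChar K := by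
    have h0 : ringChar ℚ = 0 := ringChar.eq_zero
    have hp : (ringChar K).Prime := CharP.char_is_prime K (ringChar K)
    rw [h0]
    exact fun h => hp.ne_zero h.symm
  set P := AddChar.FiniteField.primitiveChar K ℚ hcharQ with hP
  haveI : CharZero (CyclotomicField P.n ℚ) :=
    charZero_of_injective_algebraMap (algebraMap ℚ (CyclotomicField P.n ℚ)).injective
  set ψK : AddChar K (CyclotomicField P.n ℚ) := P.char with hψKdef
  have hψK : ψK.IsPrimitive := P.prim
  -- a surjective K-linear functional on F
  obtain ⟨i⟩ : Nonempty (Module.Basis.ofVectorSpaceIndex K F) := (Module.Basis.ofVectorSpace K F).index_nonempty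
  set lam : F →ₗ[K] K := (Module.Basis.ofVectorSpace K F).coord i with hlam
  have hlamsurj : ∀ a : K, ∃ y : F, lam y = a := by
    intro a
    refine ⟨a • Module.Basis.ofVectorSpace K F i, ?_⟩
    rw [hlam, map_smul, Module.Basis.coord_apply, Module.Basis.repr_self, smul_eq_mul]
    simp
  set ψ : AddChar F (CyclotomicField P.n ℚ) := Stmt18Proof.psi0 ψK lam with hψdef
  have hψ : ψ.IsPrimitive := by
    refine AddChar.IsPrimitive.of_ne_one ?_
    have hψKne : ψK ≠ 1 := by
      have h := hψK (one_ne_zero : (1 : K) ≠ 0)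
      rwa [AddChar.mulShift_one] at h
    obtain ⟨aK, haK⟩ := AddChar.ne_one_iff.mp hψKne
    obtain ⟨y, hy⟩ := hlamsurj aK
    exact AddChar.ne_one_iff.mpr ⟨y, by rw [hψdef, Stmt18Proof.psi0_apply, hy]; exact haK⟩
  -- sign facts
  have hσZ : (quadraticChar K (-1 : K)) ^ 2 = 1 :=
    quadraticChar_sq_one (neg_ne_zero.mpr one_ne_zero)
  have hsE : (((quadraticChar K (-1 : K)) : ℤ) : CyclotomicField P.n ℚ) ^ 2 = 1 := by
    rw [← Int.cast_pow, hσZ, Int.cast_one]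
  have hFK : quadraticChar F (-1 : F) = quadraticChar K (-1 : K) := by
    have h := hres (-1 : Kˣ)
    simpa using h
  -- the square of the base Gauss sum
  have hγ2 : (Stmt18Proof.gam K ψK) ^ 2 = ((quadraticChar K (-1 : K) : ℤ) : CyclotomicField P.n ℚ) * (q : CyclotomicField P.n ℚ) := by
    have h := gaussSum_sq (Stmt18Proof.chiK_ne_one hK2)
      ((quadraticChar_isQuadratic K).comp _) hψK
    rw [Stmt18Proof.gam, h, Stmt18Proof.chiK_apply, hq]
  -- value of the full Gauss sum over F
  have hFgaussVal : ∀ b : F, gaussSum (Stmt18Proof.chiF F (CyclotomicField P.n ℚ)) (AddChar.mulShift ψ b)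
      = ((∑ c, Stmt18Proof.ec lam b c : ℤ) : CyclotomicField P.n ℚ) * Stmt18Proof.gam K ψK := by
    intro b
    rw [gaussSum]
    have h0 : ∀ x : F, Stmt18Proof.chiF F (CyclotomicField P.n ℚ) x * AddChar.mulShift ψ b x
        = ((quadraticChar F x : ℤ) : CyclotomicField P.n ℚ) * ψ (b * x) := by
      intro x
      rw [Stmt18Proof.chiF_apply, AddChar.mulShift_apply]
    rw [Finset.sum_congr rfl (fun x _ => h0 x),
      Stmt18Proof.sum_units (fun x : F => ((quadraticChar F x : ℤ) : CyclotomicField P.n ℚ) * ψ (b * x)) (by simp)]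
    have h1 : ∀ x : Fˣ, ((quadraticChar F (x : F) : ℤ) : CyclotomicField P.n ℚ) * ψ (b * (x : F))
        = ((((fun _ => (1 : ℤ)) (QuotientGroup.mk x : Fˣ ⧸ baseSubgroup K F))
            * quadraticChar F (x : F) : ℤ) : CyclotomicField P.n ℚ)
          * Stmt18Proof.psi0 ψK lam (b * (x : F)) := by
      intro x
      rw [hψdef]
      norm_num
    rw [Finset.sum_congr rfl (fun x _ => h1 x),
      Stmt18Proof.master hres hK2 ψK lam (fun _ => (1 : ℤ)) b]
    norm_num
  -- (sum of all e_c(b))² * q = card F  for b ≠ 0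
  have hMb : ∀ b : F, b ≠ 0 →
      (∑ c, Stmt18Proof.ec lam b c) ^ 2 * (q : ℤ) = (Fintype.card F : ℤ) := by
    intro b hb
    have hprim : (AddChar.mulShift ψ b).IsPrimitive := AddChar.IsPrimitive.of_ne_one (hψ hb)
    have hsq := gaussSum_sq (Stmt18Proof.chiF_ne_one hF2)
      ((quadraticChar_isQuadratic F).comp _) hprim
    rw [hFgaussVal b, Stmt18Proof.chiF_apply, hFK] at hsq
    -- hsq : (↑M * γ)^2 = ↑(χK (-1)) * card F
    have hE2 : ((∑ c, Stmt18Proof.ec lam b c : ℤ) : CyclotomicField P.n ℚ) ^ 2 * (q : CyclotomicField P.n ℚ) = (Fintype.card F : CyclotomicField P.n ℚ) := by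
      have hexp : ((∑ c, Stmt18Proof.ec lam b c : ℤ) : CyclotomicField P.n ℚ) ^ 2 * (Stmt18Proof.gam K ψK) ^ 2
          = ((quadraticChar K (-1 : K) : ℤ) : CyclotomicField P.n ℚ) * (Fintype.card F : CyclotomicField P.n ℚ) := by
        rw [← hsq]; ring
      rw [hγ2] at hexp
      linear_combination ((quadraticChar K (-1 : K) : ℤ) : CyclotomicField P.n ℚ) * hexp
        + ((Fintype.card F : CyclotomicField P.n ℚ)
            - ((∑ c, Stmt18Proof.ec lam b c : ℤ) : CyclotomicField P.n ℚ) ^ 2 * (q : CyclotomicField P.n ℚ)) * hsE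
    exact_mod_cast hE2
  -- evaluation of the Paley factors under Phi
  have hval : ∀ (X : Finset (Fˣ ⧸ baseSubgroup K F)) (b : F),
      Stmt18Proof.Phi ψ b (1 + 2 • asum (DX K F X))
        = (if b = 0 then (Fintype.card F : CyclotomicField P.n ℚ) else 0)
          + ((∑ c, (if c ∈ X then (1 : ℤ) else -1) * Stmt18Proof.ec lam b c : ℤ) : CyclotomicField P.n ℚ)
            * Stmt18Proof.gam K ψK := by
    intro X b
    rw [map_add, map_one, map_nsmul, Stmt18Proof.Phi_asum]
    have hv := Stmt18Proof.value hres hK2 ψK lam X b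
    rw [← hψdef] at hv
    rw [nsmul_eq_mul, Nat.cast_ofNat, hv, Stmt18Proof.ortho ψ hψ b]
  have hvalneg : ∀ (X : Finset (Fˣ ⧸ baseSubgroup K F)) (b : F),
      Stmt18Proof.Phi ψ b (1 + 2 • asum ((DX K F X).image (fun x => -x)))
        = (if b = 0 then (Fintype.card F : CyclotomicField P.n ℚ) else 0)
          + ((∑ c, (if c ∈ X then (1 : ℤ) else -1) * Stmt18Proof.ec lam (-b) c : ℤ) : CyclotomicField P.n ℚ)
            * Stmt18Proof.gam K ψK := by
    intro X b
    rw [map_add, map_one, map_nsmul, Stmt18Proof.Phi_asum]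
    have himg : ∑ d ∈ (DX K F X).image (fun x => -x), ψ (b * d)
        = ∑ d ∈ DX K F X, ψ (-b * d) := by
      rw [Finset.sum_image (fun x _ y _ h => neg_injective h)]
      exact Finset.sum_congr rfl fun d _ => by rw [show b * -d = -b * d by ring]
    rw [himg]
    have hv := Stmt18Proof.value hres hK2 ψK lam X (-b)
    rw [← hψdef] at hv
    rw [nsmul_eq_mul, Nat.cast_ofNat, hv, Stmt18Proof.ortho ψ hψ (-b)]
    simp only [neg_eq_zero]
  -- evaluation of the right-hand side
  have hrhs : ∀ b : F,
      Stmt18Proof.Phi ψ b ((Fintype.card F : ℤ) • 1 + ((Fintype.card F : ℤ) - 1) • asum univ)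
        = (Fintype.card F : CyclotomicField P.n ℚ) + ((Fintype.card F : CyclotomicField P.n ℚ) - 1)
            * (if b = 0 then (Fintype.card F : CyclotomicField P.n ℚ) else 0) := by
    intro b
    rw [map_add, map_zsmul, map_zsmul, map_one, Stmt18Proof.Phi_asum]
    have h := Stmt18Proof.ortho ψ hψ b
    rw [h, zsmul_eq_mul, zsmul_eq_mul]
    push_cast
    ring
  -- the negated weight sum
  have hWneg : ∀ (X : Finset (Fˣ ⧸ baseSubgroup K F)) (b : F),
      (∑ c, (if c ∈ X then (1 : ℤ) else -1) * Stmt18Proof.ec lam (-b) c)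
        = quadraticChar K (-1 : K)
            * ∑ c, (if c ∈ X then (1 : ℤ) else -1) * Stmt18Proof.ec lam b c := by
    intro X b
    rw [Finset.mul_sum]
    exact Finset.sum_congr rfl fun c _ => by rw [Stmt18Proof.ec_neg]; ring
  -- transform of the Paley property
  have hPaleyT : ∀ X : Finset (Fˣ ⧸ baseSubgroup K F), IsPaleyScheme (DX K F X) →
      ∀ b : F, b ≠ 0 →
      (∑ c, (if c ∈ X then (1 : ℤ) else -1) * Stmt18Proof.ec lam b c) ^ 2 * (q : ℤ)
        = (Fintype.card F : ℤ) := by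
    intro X hP b hb
    have hPb := congrArg (Stmt18Proof.Phi ψ b) hP
    rw [map_mul, hval X b, hvalneg X b, hrhs b] at hPb
    simp only [if_neg hb, mul_zero, add_zero] at hPb
    rw [zero_add, zero_add, hWneg X b] at hPb
    -- hPb : ↑(χ * W) * γ * (↑W * γ) = card + (card - 1) * 0
    have hE1 : ((∑ c, (if c ∈ X then (1 : ℤ) else -1) * Stmt18Proof.ec lam b c : ℤ) : CyclotomicField P.n ℚ) ^ 2
        * ((quadraticChar K (-1 : K) : ℤ) : CyclotomicField P.n ℚ) * (Stmt18Proof.gam K ψK) ^ 2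
        = (Fintype.card F : CyclotomicField P.n ℚ) := by
      rw [Int.cast_mul] at hPb
      rw [← hPb]
      ring
    rw [hγ2] at hE1
    have hE2 : ((∑ c, (if c ∈ X then (1 : ℤ) else -1) * Stmt18Proof.ec lam b c : ℤ) : CyclotomicField P.n ℚ) ^ 2
        * (q : CyclotomicField P.n ℚ) = (Fintype.card F : CyclotomicField P.n ℚ) := by
      linear_combination hE1
        - (((∑ c, (if c ∈ X then (1 : ℤ) else -1) * Stmt18Proof.ec lam b c : ℤ) : CyclotomicField P.n ℚ) ^ 2
            * (q : CyclotomicField P.n ℚ)) * hsE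
    exact_mod_cast hE2
  -- T_i(T_i - M) = 0
  have hqZ : (q : ℤ) ≠ 0 := Int.natCast_ne_zero.mpr hq0
  have hTT : ∀ X : Finset (Fˣ ⧸ baseSubgroup K F), IsPaleyScheme (DX K F X) →
      ∀ b : F, b ≠ 0 →
      (∑ c ∈ X, Stmt18Proof.ec lam b c) * (∑ c ∈ X, Stmt18Proof.ec lam b c)
        = (∑ c ∈ X, Stmt18Proof.ec lam b c) * (∑ c, Stmt18Proof.ec lam b c) := by
    intro X hP b hb
    have hA := hPaleyT X hP b hb
    rw [Stmt18Proof.eps_sum X (fun c => Stmt18Proof.ec lam b c)] at hA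
    have hB := hMb b hb
    have h3 : (2 * (∑ c ∈ X, Stmt18Proof.ec lam b c) - ∑ c, Stmt18Proof.ec lam b c) ^ 2
        = (∑ c, Stmt18Proof.ec lam b c) ^ 2 :=
      mul_right_cancel₀ hqZ (hA.trans hB.symm)
    have h4 : (4 : ℤ) * ((∑ c ∈ X, Stmt18Proof.ec lam b c) * (∑ c ∈ X, Stmt18Proof.ec lam b c)
        - (∑ c ∈ X, Stmt18Proof.ec lam b c) * (∑ c, Stmt18Proof.ec lam b c)) = 0 := by
      linear_combination h3
    linarith [h4]
  -- Parseval: the products T₁ T₂ sum to zero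
  have hxq : ((quadraticChar K (-1 : K) : ℤ) : CyclotomicField P.n ℚ) * (Stmt18Proof.gam K ψK) ^ 2 = (q : CyclotomicField P.n ℚ) := by
    rw [hγ2]
    linear_combination (q : CyclotomicField P.n ℚ) * hsE
  have hqE : (q : CyclotomicField P.n ℚ) ≠ 0 := Nat.cast_ne_zero.mpr hq0
  have hpars : ∑ b : F,
      (∑ c ∈ X₁, Stmt18Proof.ec lam b c) * (∑ c ∈ X₂, Stmt18Proof.ec lam b c) = 0 := by
    have hps := Stmt18Proof.parseval ψ hψ
      (fun x : Fˣ => (((if (QuotientGroup.mk x : Fˣ ⧸ baseSubgroup K F) ∈ X₁ then (1 : ℤ) else 0)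
          * quadraticChar F (x : F) : ℤ) : CyclotomicField P.n ℚ))
      (fun x : Fˣ => (((if (QuotientGroup.mk x : Fˣ ⧸ baseSubgroup K F) ∈ X₂ then (1 : ℤ) else 0)
          * quadraticChar F (x : F) : ℤ) : CyclotomicField P.n ℚ))
    have hin1 : ∀ b : F, ∑ x : Fˣ,
        (((if (QuotientGroup.mk x : Fˣ ⧸ baseSubgroup K F) ∈ X₁ then (1 : ℤ) else 0)
          * quadraticChar F (x : F) : ℤ) : CyclotomicField P.n ℚ) * ψ (b * (x : F))
        = ((∑ c ∈ X₁, Stmt18Proof.ec lam b c : ℤ) : CyclotomicField P.n ℚ) * Stmt18Proof.gam K ψK := by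
      intro b
      have hm := Stmt18Proof.master hres hK2 ψK lam
        (fun c => if c ∈ X₁ then (1 : ℤ) else 0) b
      rw [← hψdef] at hm
      rw [hm, Stmt18Proof.ind_sum X₁ (fun c => Stmt18Proof.ec lam b c)]
    have hin2 : ∀ b : F, ∑ y : Fˣ,
        (((if (QuotientGroup.mk y : Fˣ ⧸ baseSubgroup K F) ∈ X₂ then (1 : ℤ) else 0)
          * quadraticChar F (y : F) : ℤ) : CyclotomicField P.n ℚ) * ψ (-b * (y : F))
        = ((quadraticChar K (-1 : K) * ∑ c ∈ X₂, Stmt18Proof.ec lam b c : ℤ) : CyclotomicField P.n ℚ)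
            * Stmt18Proof.gam K ψK := by
      intro b
      have hm := Stmt18Proof.master hres hK2 ψK lam
        (fun c => if c ∈ X₂ then (1 : ℤ) else 0) (-b)
      rw [← hψdef] at hm
      rw [hm, Stmt18Proof.ind_sum X₂ (fun c => Stmt18Proof.ec lam (-b) c)]
      congr 2
      rw [Finset.mul_sum]
      exact Finset.sum_congr rfl fun c _ => by rw [Stmt18Proof.ec_neg]
    rw [Finset.sum_congr rfl (fun b _ => by rw [hin1 b, hin2 b])] at hps
    have hzero : ∑ x : Fˣ,
        ((((if (QuotientGroup.mk x : Fˣ ⧸ baseSubgroup K F) ∈ X₁ then (1 : ℤ) else 0)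
          * quadraticChar F (x : F) : ℤ) : CyclotomicField P.n ℚ)
        * (((if (QuotientGroup.mk x : Fˣ ⧸ baseSubgroup K F) ∈ X₂ then (1 : ℤ) else 0)
          * quadraticChar F (x : F) : ℤ) : CyclotomicField P.n ℚ)) = 0 := by
      refine Finset.sum_eq_zero fun x _ => ?_
      by_cases h1x : (QuotientGroup.mk x : Fˣ ⧸ baseSubgroup K F) ∈ X₁
      · have h2x : (QuotientGroup.mk x : Fˣ ⧸ baseSubgroup K F) ∉ X₂ := by
          intro h2x
          have := Finset.mem_inter.mpr ⟨h1x, h2x⟩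
          rw [hdisj] at this
          exact absurd this (Finset.notMem_empty _)
        simp [h2x]
      · simp [h1x]
    rw [hzero, mul_zero] at hps
    -- hps : ∑ b, ↑T₁ * γ * (↑(χ * T₂) * γ) = 0
    have hps2 : (∑ b : F, ((((∑ c ∈ X₁, Stmt18Proof.ec lam b c)
        * (∑ c ∈ X₂, Stmt18Proof.ec lam b c) : ℤ)) : CyclotomicField P.n ℚ)) * (q : CyclotomicField P.n ℚ) = 0 := by
      rw [← hxq, ← hps, Finset.sum_mul]
      refine Finset.sum_congr rfl fun b _ => ?_
      rw [Int.cast_mul, Int.cast_mul]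
      ring
    have hps3 : ((∑ b : F, (∑ c ∈ X₁, Stmt18Proof.ec lam b c)
        * (∑ c ∈ X₂, Stmt18Proof.ec lam b c) : ℤ) : CyclotomicField P.n ℚ) = 0 := by
      have := mul_eq_zero.mp hps2
      rcases this with h | h
      · rw [← h]
        push_cast
        rfl
      · exact absurd h hqE
    exact_mod_cast hps3
  -- T₁(b) * T₂(b) = 0 for every b
  have hnn : ∀ b : F, 0 ≤ (∑ c ∈ X₁, Stmt18Proof.ec lam b c)
      * (∑ c ∈ X₂, Stmt18Proof.ec lam b c) := by
    intro b
    by_cases hb : b = 0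
    · subst hb
      have : ∀ c, Stmt18Proof.ec lam (0 : F) c = 0 := fun c => Stmt18Proof.ec_zero lam c
      rw [Finset.sum_congr rfl (fun c _ => this c), Finset.sum_const, smul_zero, zero_mul]
    · rcases eq_or_ne (∑ c ∈ X₁, Stmt18Proof.ec lam b c) 0 with hz | hz
      · rw [hz, zero_mul]
      · have e1 := mul_left_cancel₀ hz (hTT X₁ h1 b hb)
        rcases eq_or_ne (∑ c ∈ X₂, Stmt18Proof.ec lam b c) 0 with hz2 | hz2
        · rw [hz2, mul_zero]
        · have e2 := mul_left_cancel₀ hz2 (hTT X₂ h2 b hb)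
          rw [e1, e2]
          exact mul_self_nonneg _
  have hZb : ∀ b : F, (∑ c ∈ X₁, Stmt18Proof.ec lam b c)
      * (∑ c ∈ X₂, Stmt18Proof.ec lam b c) = 0 := by
    have h := (Finset.sum_eq_zero_iff_of_nonneg (fun b _ => hnn b)).mp hpars
    exact fun b => h b (Finset.mem_univ b)
  -- final assembly
  refine Stmt18Proof.phi_inj ψ hψ fun b => ?_
  rw [map_mul, hval (X₁ ∪ X₂) b, hvalneg (X₁ ∪ X₂) b, hrhs b]
  by_cases hb : b = 0
  · subst hb
    simp only [if_pos rfl, neg_zero]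
    have hW0 : (∑ c, (if c ∈ X₁ ∪ X₂ then (1 : ℤ) else -1) * Stmt18Proof.ec lam (0 : F) c) = 0 :=
      Finset.sum_eq_zero fun c _ => by rw [Stmt18Proof.ec_zero, mul_zero]
    rw [hW0]
    push_cast
    ring
  · simp only [if_neg hb]
    rw [zero_add, zero_add, hWneg (X₁ ∪ X₂) b, Int.cast_mul,
      Stmt18Proof.eps_union X₁ X₂ hdisj (fun c => Stmt18Proof.ec lam b c)]
    -- A := 2T₁ + 2T₂ - M satisfies A² = M², and M²q = card F
    have key : (2 * (∑ c ∈ X₁, Stmt18Proof.ec lam b c)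
        + 2 * (∑ c ∈ X₂, Stmt18Proof.ec lam b c) - ∑ c, Stmt18Proof.ec lam b c) ^ 2
        = (∑ c, Stmt18Proof.ec lam b c) ^ 2 := by
      linear_combination 4 * (hTT X₁ h1 b hb) + 4 * (hTT X₂ h2 b hb) + 8 * (hZb b)
    have hA2c : ((2 * (∑ c ∈ X₁, Stmt18Proof.ec lam b c)
        + 2 * (∑ c ∈ X₂, Stmt18Proof.ec lam b c) - ∑ c, Stmt18Proof.ec lam b c : ℤ) : CyclotomicField P.n ℚ) ^ 2
        = ((∑ c, Stmt18Proof.ec lam b c : ℤ) : CyclotomicField P.n ℚ) ^ 2 := by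
      rw [← Int.cast_pow, ← Int.cast_pow, key]
    have hMQc : ((∑ c, Stmt18Proof.ec lam b c : ℤ) : CyclotomicField P.n ℚ) ^ 2 * (q : CyclotomicField P.n ℚ)
        = (Fintype.card F : CyclotomicField P.n ℚ) := by
      have h := hMb b hb
      have h' := congrArg (fun z : ℤ => (z : CyclotomicField P.n ℚ)) h
      push_cast at h'
      exact_mod_cast h'
    -- finish with an algebraic identity
    linear_combination (((quadraticChar K (-1 : K) : ℤ) : CyclotomicField P.n ℚ)
        * ((2 * (∑ c ∈ X₁, Stmt18Proof.ec lam b c)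
            + 2 * (∑ c ∈ X₂, Stmt18Proof.ec lam b c) - ∑ c, Stmt18Proof.ec lam b c : ℤ) : CyclotomicField P.n ℚ) ^ 2)
          * hγ2
      + (((2 * (∑ c ∈ X₁, Stmt18Proof.ec lam b c)
            + 2 * (∑ c ∈ X₂, Stmt18Proof.ec lam b c) - ∑ c, Stmt18Proof.ec lam b c : ℤ) : CyclotomicField P.n ℚ) ^ 2
          * (q : CyclotomicField P.n ℚ)) * hsE
      + (q : CyclotomicField P.n ℚ) * hA2c + hMQc
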